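/- arXiv:0704.3819 — 3 statements merged into one kernel-verified Lean document; each statement's English description precedes it below -/
import Mathlib

section
/- Let a be a nonzero complex number, m a positive integer, N a positive integer, and f ∈ C[t,t^{-1}] of the form f = t^ε g with g ∈ C[t^m, t^{-m}] and 0 ≤ ε ≤ m-1. Then f lies in the ideal (t-a)^N C[t,t^{-1}] if and only if f lies in t^ε (t^m - a^m)^N C[t^m, t^{-m}]. -/
open LaurentPolynomial

open Polynomial in
lemma aux_geom (a : ℂ) (m : ℕ) (hm : 0 < m) (ha : a ≠ 0) :
    ∃ S : ℂ[X], (X : ℂ[X]) ^ m - Polynomial.C (a ^ m) = (X - Polynomial.C a) * S ∧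
      S.eval a ≠ 0 := by
  refine ⟨∑ i ∈ Finset.range m, (X : ℂ[X]) ^ i * (Polynomial.C a) ^ (m - 1 - i), ?_, ?_⟩
  · rw [mul_comm, geom_sum₂_mul, map_pow]
  · have : (∑ i ∈ Finset.range m, (X : ℂ[X]) ^ i * (Polynomial.C a) ^ (m - 1 - i)).eval a
        = (m : ℂ) * a ^ (m - 1) := by
      rw [Polynomial.eval_finset_sum]
      have : ∀ i ∈ Finset.range m,
          (((X : ℂ[X]) ^ i * (Polynomial.C a) ^ (m - 1 - i)).eval a) = a ^ (m - 1) := by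
        intro i hi
        simp only [Polynomial.eval_mul, Polynomial.eval_pow, Polynomial.eval_X,
          Polynomial.eval_C, ← pow_add]
        congr 1
        have := Finset.mem_range.mp hi
        omega
      rw [Finset.sum_congr rfl this, Finset.sum_const, Finset.card_range, nsmul_eq_mul]
    rw [this]
    exact mul_ne_zero (Nat.cast_ne_zero.mpr hm.ne') (pow_ne_zero _ ha)

open Polynomial in
lemma aux_dvd_expand (a : ℂ) (ha : a ≠ 0) {m : ℕ} (hm : 0 < m) (N : ℕ) (Q : ℂ[X]) :
    ((X : ℂ[X]) - Polynomial.C a) ^ N ∣ Polynomial.expand ℂ m Q ↔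
      ((X : ℂ[X]) - Polynomial.C (a ^ m)) ^ N ∣ Q := by
  obtain ⟨S, hS, hSa⟩ := aux_geom a m hm ha
  induction N generalizing Q with
  | zero => simp
  | succ N ih =>
    constructor
    · intro hdvd
      have h1 : ((X : ℂ[X]) - Polynomial.C a) ∣ Polynomial.expand ℂ m Q :=
        dvd_trans (dvd_pow_self _ (Nat.succ_ne_zero N)) hdvd
      have hroot : Q.IsRoot (a ^ m) := by
        have := Polynomial.dvd_iff_isRoot.mp h1
        rwa [Polynomial.IsRoot, Polynomial.expand_eval] at this
      obtain ⟨Q', hQ'⟩ := Polynomial.dvd_iff_isRoot.mpr hroot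
      subst hQ'
      rw [map_mul, map_sub, Polynomial.expand_X, Polynomial.expand_C, hS, mul_assoc] at hdvd
      rw [pow_succ'] at hdvd
      have hcancel : ((X : ℂ[X]) - Polynomial.C a) ^ N ∣ S * Polynomial.expand ℂ m Q' :=
        (mul_dvd_mul_iff_left (Polynomial.X_sub_C_ne_zero a)).mp hdvd
      have hnd : ¬ ((X : ℂ[X]) - Polynomial.C a) ∣ S := fun h =>
        hSa (Polynomial.dvd_iff_isRoot.mp h)
      have := (Polynomial.prime_X_sub_C a).pow_dvd_of_dvd_mul_left N hnd hcancel
      rw [pow_succ']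
      exact mul_dvd_mul_left _ ((ih Q').mp this)
    · rintro ⟨R, rfl⟩
      rw [map_mul, map_pow, map_sub, Polynomial.expand_X, Polynomial.expand_C, hS]
      exact Dvd.dvd.mul_right (pow_dvd_pow_of_dvd (Dvd.intro S rfl) _) _

open Polynomial in
lemma aux_exists_expand {m : ℕ} (hm : 0 < m) (P : ℂ[X]) (hP : ∀ k ∈ P.support, m ∣ k) :
    ∃ Q : ℂ[X], P = Polynomial.expand ℂ m Q := by
  refine ⟨Polynomial.contract m P, ?_⟩
  ext n
  rw [Polynomial.coeff_expand hm, Polynomial.coeff_contract hm.ne']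
  split_ifs with h
  · rw [Nat.div_mul_cancel h]
  · by_contra hne
    exact h (hP n (Polynomial.mem_support_iff.mpr fun h0 => hne (h0.symm ▸ rfl)))

open Polynomial in
lemma aux_laurent_dvd (a : ℂ) (ha : a ≠ 0) (N : ℕ) (p : ℂ[X])
    (h : ((T 1 - LaurentPolynomial.C a) ^ N : LaurentPolynomial ℂ) ∣ p.toLaurent) :
    ((X : ℂ[X]) - Polynomial.C a) ^ N ∣ p := by
  obtain ⟨s, hs⟩ := h
  obtain ⟨k, r, hr⟩ := exists_T_pow s
  have key : (p * X ^ k).toLaurent = (((X : ℂ[X]) - Polynomial.C a) ^ N * r).toLaurent := by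
    simp only [map_mul, map_pow, map_sub, Polynomial.toLaurent_X, Polynomial.toLaurent_C,
      T_pow, mul_one]
    rw [hs, hr]
    ring
  have hpoly : p * X ^ k = ((X : ℂ[X]) - Polynomial.C a) ^ N * r :=
    Polynomial.toLaurent_injective key
  have hdvd : ((X : ℂ[X]) - Polynomial.C a) ^ N ∣ p * X ^ k := Dvd.intro r hpoly.symm
  have hnd : ¬ ((X : ℂ[X]) - Polynomial.C a) ∣ (X : ℂ[X]) ^ k := by
    intro hdd
    have := Polynomial.dvd_iff_isRoot.mp hdd
    simp only [Polynomial.IsRoot, Polynomial.eval_pow, Polynomial.eval_X] at this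
    exact pow_ne_zero k ha this
  exact (Polynomial.prime_X_sub_C a).pow_dvd_of_dvd_mul_right N hnd hdvd

lemma aux_mul_T_apply (f : LaurentPolynomial ℂ) (x y : ℤ) :
    (f * T x : LaurentPolynomial ℂ).coeff y = f.coeff (y - x) := by
  exact (AddMonoidAlgebra.coeff_mul_single_apply f (1 : ℂ) x y).trans (mul_one _)

/-- Let `a ≠ 0`, `m, N > 0`, and `f = t^ε g` with `g ∈ ℂ[tᵐ,t⁻ᵐ]` and
`0 ≤ ε ≤ m - 1`.  Then `f ∈ (t-a)^N ℂ[t,t⁻¹]` iff `f ∈ t^ε (tᵐ - aᵐ)^N ℂ[tᵐ,t⁻ᵐ]`. -/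
theorem stmt3 (a : ℂ) (ha : a ≠ 0) (m N : ℕ) (hm : 0 < m) (hN : 0 < N)
    (ε : ℕ) (hε : ε ≤ m - 1) (gp : LaurentPolynomial ℂ)
    (hgp : ∀ k ∈ gp.coeff.support, (m : ℤ) ∣ k) (f : LaurentPolynomial ℂ)
    (hf : f = T (ε : ℤ) * gp) :
    f ∈ Ideal.span {(T 1 - C a) ^ N} ↔
      ∃ h : LaurentPolynomial ℂ, (∀ k ∈ h.coeff.support, (m : ℤ) ∣ k) ∧
        f = T (ε : ℤ) * (T (m : ℤ) - C (a ^ m)) ^ N * h := by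
  subst hf
  rw [Ideal.mem_span_singleton]
  constructor
  · intro hdvd
    -- reduce to divisibility of gp
    have hdvd' : ((T 1 - C a) ^ N : LaurentPolynomial ℂ) ∣ gp :=
      ((isUnit_T (ε : ℤ)).dvd_mul_left).mp hdvd
    obtain ⟨n, P, hP⟩ := exists_T_pow gp
    -- boost to a multiple of m
    set P' : Polynomial ℂ := P * Polynomial.X ^ (m * n - n) with hP'def
    have hn : n ≤ m * n := Nat.le_mul_of_pos_left n hm
    have hP' : P'.toLaurent = gp * T ((m * n : ℕ) : ℤ) := by
      rw [hP'def, map_mul, Polynomial.toLaurent_X_pow, hP, mul_T_assoc]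
      congr 1
      push_cast [Nat.cast_sub hn]
      ring
    have hgpP' : gp = P'.toLaurent * T (-((m * n : ℕ) : ℤ)) := by
      rw [hP', mul_T_assoc, add_neg_cancel, T_zero, mul_one]
    -- support of P' is in multiples of m
    have hsupp : ∀ k ∈ P'.support, m ∣ k := by
      intro k hk
      have hk' : ((k : ℤ)) ∈ P'.toLaurent.coeff.support := by
        rw [toLaurent_support]
        exact Finset.mem_map.mpr ⟨k, hk, rfl⟩
      have hval : P'.toLaurent.coeff (k : ℤ) ≠ 0 := Finsupp.mem_support_iff.mp hk'
      rw [hP'] at hval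
      rw [aux_mul_T_apply] at hval
      have hdvdk : (m : ℤ) ∣ ((k : ℤ) - ((m * n : ℕ) : ℤ)) :=
        hgp _ (Finsupp.mem_support_iff.mpr hval)
      have h2 : (m : ℤ) ∣ ((m * n : ℕ) : ℤ) := by push_cast; exact Dvd.intro n rfl
      have : (m : ℤ) ∣ (k : ℤ) := by
        have := dvd_add hdvdk h2
        rwa [sub_add_cancel] at this
      exact_mod_cast this
    obtain ⟨Q, hQ⟩ := aux_exists_expand hm P' hsupp
    -- transfer the divisibility
    have hdvdP' : ((T 1 - C a) ^ N : LaurentPolynomial ℂ) ∣ P'.toLaurent := by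
      rw [hP']
      exact Dvd.dvd.mul_right hdvd' _
    have hdvdQ : ((Polynomial.X : Polynomial ℂ) - Polynomial.C (a ^ m)) ^ N ∣ Q := by
      rw [← aux_dvd_expand a ha hm, ← hQ]
      exact aux_laurent_dvd a ha N P' hdvdP'
    obtain ⟨R, hR⟩ := hdvdQ
    refine ⟨(Polynomial.expand ℂ m R).toLaurent * T (-((m * n : ℕ) : ℤ)), ?_, ?_⟩
    · intro k hk
      have hval : ((Polynomial.expand ℂ m R).toLaurent * T (-((m * n : ℕ) : ℤ)) :
          LaurentPolynomial ℂ).coeff k ≠ 0 :=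
        Finsupp.mem_support_iff.mp hk
      rw [aux_mul_T_apply] at hval
      have hmem : (k - -((m * n : ℕ) : ℤ)) ∈ (Polynomial.expand ℂ m R).toLaurent.coeff.support :=
        Finsupp.mem_support_iff.mpr hval
      rw [toLaurent_support] at hmem
      obtain ⟨j, hj, hjk⟩ := Finset.mem_map.mp hmem
      have hjm : m ∣ j := by
        have := Polynomial.mem_support_iff.mp hj
        rw [Polynomial.coeff_expand hm] at this
        by_contra hc
        simp [hc] at this
      have hjk' : k + ((m * n : ℕ) : ℤ) = (j : ℤ) := by
        simpa [sub_neg_eq_add, eq_comm] using hjk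
      have h2 : (m : ℤ) ∣ ((m * n : ℕ) : ℤ) := by push_cast; exact Dvd.intro n rfl
      have h3 : (m : ℤ) ∣ (j : ℤ) := Int.natCast_dvd_natCast.mpr hjm
      have : (m : ℤ) ∣ (k + ((m * n : ℕ) : ℤ)) := hjk' ▸ h3
      have := (dvd_add_right h2).mp (by rwa [add_comm] at this)
      exact this
    · have hTm : ((Polynomial.expand ℂ m) ((Polynomial.X - Polynomial.C (a ^ m)) ^ N * R)).toLaurent
          = (T (m : ℤ) - C (a ^ m)) ^ N * (Polynomial.expand ℂ m R).toLaurent := by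
        simp only [map_mul, map_pow, map_sub, Polynomial.expand_X, Polynomial.expand_C,
          Polynomial.toLaurent_X, Polynomial.toLaurent_C, T_pow, mul_one]
      rw [hgpP', hQ, hR, hTm]
      ring
  · rintro ⟨h, -, heq⟩
    rw [heq]
    have h1 : ((T 1 - C a) : LaurentPolynomial ℂ) ∣ (T (m : ℤ) - C (a ^ m)) := by
      have := sub_dvd_pow_sub_pow (T 1 : LaurentPolynomial ℂ) (C a) m
      rwa [T_pow, mul_one, ← map_pow] at this
    calc ((T 1 - C a) ^ N : LaurentPolynomial ℂ)
        ∣ (T (m : ℤ) - C (a ^ m)) ^ N := pow_dvd_pow_of_dvd h1 N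
      _ ∣ T (ε : ℤ) * (T (m : ℤ) - C (a ^ m)) ^ N * h := ⟨T (ε : ℤ) * h, by ring⟩
end

section
/- Let a_1, ..., a_ℓ be nonzero complex numbers such that a_1^m, ..., a_ℓ^m are pairwise distinct (hence a_1, ..., a_ℓ are pairwise distinct), and N ∈ Z_+. With 𝔤^σ_{b,N} denoting the quotient of L^σ(𝔤) by ⊕_ε 𝔤_ε ⊗ t^{m-ε}(t^m - b)^N C[t^m,t^{-m}], there is a Lie algebra isomorphism 𝔤^σ_{(a_1^m,...,a_ℓ^m), N} ≅ ⊕_{i=1}^ℓ 𝔤^σ_{a_i^m, N}, where 𝔤^σ_{(a_1^m,...,a_ℓ^m),N} is the quotient of L^σ(𝔤) by ⊕_ε 𝔤_ε ⊗ t^{m-ε} ∏_{k=1}^ℓ (t^m - a_k^m)^N C[t^m, t^{-m}]. -/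
open scoped TensorProduct
open LaurentPolynomial

noncomputable section

/-- The loop algebra `L(g) = g ⊗ ℂ[t,t⁻¹]` (realized as `ℂ[t,t⁻¹] ⊗[ℂ] g`), with bracket
`⁅x ⊗ tʳ, y ⊗ tˢ⁆ = ⁅x,y⁆ ⊗ t^{r+s}`. -/
abbrev Loop (g : Type*) [LieRing g] [LieAlgebra ℂ g] : Type _ := LaurentPolynomial ℂ ⊗[ℂ] g

instance (g : Type*) [LieRing g] [LieAlgebra ℂ g] : LieAlgebra ℂ (Loop g) :=
  { (inferInstance : Module ℂ (Loop g)) with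
    lie_smul := fun t x y => by
      rw [← algebraMap_smul (LaurentPolynomial ℂ) t y,
        ← algebraMap_smul (LaurentPolynomial ℂ) t ⁅x, y⁆]
      exact LieAlgebra.lie_smul _ x y }

variable {g : Type*} [LieRing g] [LieAlgebra ℂ g]

/-- The `μ`-eigenspace of an automorphism `σ` of `g`; for `μ = ζ^ε` this is the piece
`g_ε` of the eigenspace decomposition. -/
def eig (σ : g ≃ₗ⁅ℂ⁆ g) (μ : ℂ) : Submodule ℂ g :=
  Module.End.eigenspace (σ.toLinearEquiv : g →ₗ[ℂ] g) μ

/-- The subset `⋃_ε { g_ε ⊗ t^{mk-ε} : k ∈ ℤ }` of `L(g)`, whose span is the twisted loop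
algebra `L^σ(g) = ⊕_{ε=0}^{m-1} g_ε ⊗ t^{m-ε} ℂ[tᵐ,t⁻ᵐ]`. -/
def twistedSet (m : ℕ) (σ : g ≃ₗ⁅ℂ⁆ g) (ζ : ℂ) : Set (Loop g) :=
  {z | ∃ (ε : Fin m) (k : ℤ) (x : g), x ∈ eig σ (ζ ^ (ε : ℕ)) ∧
    z = (T ((m : ℤ) * k - ((ε : ℕ) : ℤ)) : LaurentPolynomial ℂ) ⊗ₜ[ℂ] x}

/-- The twisted loop algebra `L^σ(g) = ⊕_{ε=0}^{m-1} g_ε ⊗ t^{m-ε} ℂ[tᵐ,t⁻ᵐ]`, the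
fixed-point subalgebra of `σ̃(x ⊗ tᵏ) = ζᵏ σ(x) ⊗ tᵏ`. -/
def twistedLoop (m : ℕ) (σ : g ≃ₗ⁅ℂ⁆ g) (ζ : ℂ) : LieSubalgebra ℂ (Loop g) :=
  LieSubalgebra.lieSpan ℂ (Loop g) (twistedSet m σ ζ)

/-- The subset `⋃_ε { g_ε ⊗ t^{mk-ε}·q : k ∈ ℤ }` of `L(g)`; for
`q = ∏ (tᵐ - aᵣᵐ)^N` its span is the ideal `⊕_ε g_ε ⊗ t^{m-ε} ∏ (tᵐ-aᵣᵐ)^N ℂ[tᵐ,t⁻ᵐ]`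
of `L^σ(g)`. -/
def twistedIdealSet (m : ℕ) (σ : g ≃ₗ⁅ℂ⁆ g) (ζ : ℂ) (q : LaurentPolynomial ℂ) :
    Set (Loop g) :=
  {z | ∃ (ε : Fin m) (k : ℤ) (x : g), x ∈ eig σ (ζ ^ (ε : ℕ)) ∧
    z = ((T ((m : ℤ) * k - ((ε : ℕ) : ℤ)) : LaurentPolynomial ℂ) * q) ⊗ₜ[ℂ] x}

/-- The ideal `⊕_ε g_ε ⊗ t^{m-ε}·q·ℂ[tᵐ,t⁻ᵐ]` of the twisted loop algebra `L^σ(g)`. -/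
def twistedIdeal (m : ℕ) (σ : g ≃ₗ⁅ℂ⁆ g) (ζ : ℂ) (q : LaurentPolynomial ℂ) :
    LieIdeal ℂ ↥(twistedLoop m σ ζ) :=
  LieSubmodule.lieSpan ℂ ↥(twistedLoop m σ ζ)
    {z : ↥(twistedLoop m σ ζ) |
      (z : Loop g) ∈ Submodule.span ℂ (twistedIdealSet m σ ζ q)}

-- ==================== auxiliary development ====================
namespace Stmt9Aux

open Polynomial

variable (m : ℕ) (σ : g ≃ₗ⁅ℂ⁆ g) (ζ : ℂ)

/-- Multiplication by a Laurent polynomial, as a `ℂ`-linear endomorphism of the loop algebra. -/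
def lsm (f : LaurentPolynomial ℂ) : Loop g →ₗ[ℂ] Loop g :=
  ((LinearMap.lsmul (LaurentPolynomial ℂ) (Loop g)) f).restrictScalars ℂ

@[simp] lemma lsm_apply (f : LaurentPolynomial ℂ) (z : Loop g) : lsm f z = f • z := rfl

def spanT : Submodule ℂ (Loop g) := Submodule.span ℂ (twistedSet m σ ζ)

def spanI (q : LaurentPolynomial ℂ) : Submodule ℂ (Loop g) :=
  Submodule.map (lsm q) (spanT m σ ζ)

lemma sub_smul_loop (f f' : LaurentPolynomial ℂ) (z : Loop g) :
    (f - f') • z = f • z - f' • z := sub_smul f f' z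

lemma one_smul_loop (z : Loop g) : (1 : LaurentPolynomial ℂ) • z = z := one_smul _ z

lemma csmul_comm (c : ℂ) (f : LaurentPolynomial ℂ) (z : Loop g) :
    f • (c • z) = c • (f • z) := by
  rw [← algebraMap_smul (LaurentPolynomial ℂ) c z,
    ← algebraMap_smul (LaurentPolynomial ℂ) c (f • z), smul_smul, smul_smul, mul_comm]

lemma T_smul_twistedSet {z : Loop g} (hz : z ∈ twistedSet m σ ζ) (j : ℤ) :
    (T ((m : ℤ) * j) : LaurentPolynomial ℂ) • z ∈ twistedSet m σ ζ := by
  obtain ⟨ε, k, x, hx, rfl⟩ := hz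
  refine ⟨ε, j + k, x, hx, ?_⟩
  rw [TensorProduct.smul_tmul', smul_eq_mul, ← T_add]
  congr 2
  ring

lemma T_smul_spanT (j : ℤ) {z : Loop g} (hz : z ∈ spanT m σ ζ) :
    (T ((m : ℤ) * j) : LaurentPolynomial ℂ) • z ∈ spanT m σ ζ := by
  induction hz using Submodule.span_induction with
  | mem w hw => exact Submodule.subset_span (T_smul_twistedSet m σ ζ hw j)
  | zero => rw [smul_zero]; exact Submodule.zero_mem _
  | add u v hu hv ihu ihv => rw [smul_add]; exact Submodule.add_mem _ ihu ihv
  | smul c u hu ihu => rw [csmul_comm]; exact Submodule.smul_mem _ _ ihu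

lemma aeval_smul_spanT (p : ℂ[X]) {z : Loop g} (hz : z ∈ spanT m σ ζ) :
    (Polynomial.aeval (T (m : ℤ) : LaurentPolynomial ℂ) p) • z ∈ spanT m σ ζ := by
  induction p using Polynomial.induction_on' with
  | add p q hp hq => rw [map_add, add_smul]; exact Submodule.add_mem _ hp hq
  | monomial n c =>
    rw [← Polynomial.C_mul_X_pow_eq_monomial, map_mul, map_pow, Polynomial.aeval_X,
      Polynomial.aeval_C, mul_smul, T_pow, mul_comm (n : ℤ) (m : ℤ)]
    rw [algebraMap_smul]
    exact Submodule.smul_mem _ _ (T_smul_spanT m σ ζ _ hz)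


lemma span_twistedIdealSet (q : LaurentPolynomial ℂ) :
    Submodule.span ℂ (twistedIdealSet m σ ζ q) = spanI m σ ζ q := by
  rw [spanI, spanT, Submodule.map_span]
  congr 1
  ext z
  constructor
  · rintro ⟨ε, k, x, hx, rfl⟩
    exact ⟨_, ⟨ε, k, x, hx, rfl⟩, by
      simp only [lsm_apply, TensorProduct.smul_tmul', smul_eq_mul, mul_comm]⟩
  · rintro ⟨w, ⟨ε, k, x, hx, rfl⟩, rfl⟩
    exact ⟨ε, k, x, hx, by
      simp only [lsm_apply, TensorProduct.smul_tmul', smul_eq_mul, mul_comm]⟩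

lemma dvd_smul_mem {q p : ℂ[X]} (h : q ∣ p) {w : Loop g} (hw : w ∈ spanT m σ ζ) :
    (Polynomial.aeval (T (m : ℤ) : LaurentPolynomial ℂ) p) • w ∈
      spanI m σ ζ (Polynomial.aeval (T (m : ℤ) : LaurentPolynomial ℂ) q) := by
  obtain ⟨c, rfl⟩ := h
  rw [map_mul, mul_smul]
  exact ⟨_, aeval_smul_spanT m σ ζ c hw, rfl⟩

lemma mem_spanI {z : Loop g} {q : LaurentPolynomial ℂ} :
    z ∈ spanI m σ ζ q ↔ ∃ w ∈ spanT m σ ζ, z = q • w := by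
  constructor
  · rintro ⟨w, hw, rfl⟩; exact ⟨w, hw, rfl⟩
  · rintro ⟨w, hw, rfl⟩; exact ⟨w, hw, rfl⟩

lemma eig_lie (hζm : ζ ^ m = 1) (hm : 0 < m) {ε ε' : ℕ} {x y : g}
    (hx : x ∈ eig σ (ζ ^ ε)) (hy : y ∈ eig σ (ζ ^ ε')) :
    ⁅x, y⁆ ∈ eig σ (ζ ^ ((ε + ε') % m)) := by
  rw [eig, Module.End.mem_eigenspace_iff] at hx hy ⊢
  have hσ : ∀ u : g, (σ.toLinearEquiv : g →ₗ[ℂ] g) u = σ u := fun _ => rfl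
  rw [hσ] at hx hy ⊢
  have hpow : ζ ^ (ε + ε') = ζ ^ ((ε + ε') % m) := by
    conv_lhs => rw [← Nat.div_add_mod (ε + ε') m]
    rw [pow_add, pow_mul, hζm, one_pow, one_mul]
  calc σ ⁅x, y⁆ = ⁅σ x, σ y⁆ := σ.toLieHom.map_lie x y
    _ = ⁅ζ ^ ε • x, ζ ^ ε' • y⁆ := by rw [hx, hy]
    _ = (ζ ^ ε * ζ ^ ε') • ⁅x, y⁆ := by rw [smul_lie, lie_smul, smul_smul]
    _ = ζ ^ ((ε + ε') % m) • ⁅x, y⁆ := by rw [← pow_add, hpow]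

lemma bracket_twistedSet (hζm : ζ ^ m = 1) {z w : Loop g}
    (hz : z ∈ twistedSet m σ ζ) (hw : w ∈ twistedSet m σ ζ) :
    ⁅z, w⁆ ∈ twistedSet m σ ζ := by
  obtain ⟨ε, k, x, hx, rfl⟩ := hz
  obtain ⟨ε', k', y, hy, rfl⟩ := hw
  have hm : 0 < m := ε.pos
  refine ⟨⟨((ε : ℕ) + (ε' : ℕ)) % m, Nat.mod_lt _ hm⟩,
    k + k' - ((((ε : ℕ) + (ε' : ℕ)) / m : ℕ) : ℤ), ⁅x, y⁆,
    eig_lie m σ ζ hζm hm hx hy, ?_⟩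
  rw [LieAlgebra.ExtendScalars.bracket_tmul, ← T_add]
  congr 2
  have hdm : (((ε : ℕ) + (ε' : ℕ) : ℕ) : ℤ) =
      (m : ℤ) * ((((ε : ℕ) + (ε' : ℕ)) / m : ℕ) : ℤ) +
      ((((ε : ℕ) + (ε' : ℕ)) % m : ℕ) : ℤ) := by
    exact_mod_cast (Nat.div_add_mod ((ε : ℕ) + (ε' : ℕ)) m).symm
  push_cast at hdm ⊢
  linarith [hdm]

lemma lzero (w : Loop g) : ⁅(0 : Loop g), w⁆ = 0 := zero_lie w
lemma zlie (w : Loop g) : ⁅w, (0 : Loop g)⁆ = 0 := lie_zero w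
lemma addlie (u v w : Loop g) : ⁅u + v, w⁆ = ⁅u, w⁆ + ⁅v, w⁆ := add_lie u v w
lemma lieadd (u v w : Loop g) : ⁅w, u + v⁆ = ⁅w, u⁆ + ⁅w, v⁆ := lie_add w u v
lemma smullie (c : ℂ) (u w : Loop g) : ⁅c • u, w⁆ = c • ⁅u, w⁆ := smul_lie c u w
lemma liesmul (c : ℂ) (u w : Loop g) : ⁅w, c • u⁆ = c • ⁅w, u⁆ := lie_smul c w u
lemma liesmulA (q : LaurentPolynomial ℂ) (u w : Loop g) : ⁅w, q • u⁆ = q • ⁅w, u⁆ :=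
  lie_smul q w u

lemma bracket_spanT (hζm : ζ ^ m = 1) {z w : Loop g}
    (hz : z ∈ spanT m σ ζ) (hw : w ∈ spanT m σ ζ) : ⁅z, w⁆ ∈ spanT m σ ζ := by
  induction hw using Submodule.span_induction with
  | mem w' hw' =>
    induction hz using Submodule.span_induction with
    | mem z' hz' => exact Submodule.subset_span (bracket_twistedSet m σ ζ hζm hz' hw')
    | zero => rw [lzero]; exact Submodule.zero_mem _
    | add u v hu hv ihu ihv => rw [addlie]; exact Submodule.add_mem _ ihu ihv
    | smul c u hu ihu => rw [smullie]; exact Submodule.smul_mem _ _ ihu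
  | zero => rw [zlie]; exact Submodule.zero_mem _
  | add u v hu hv ihu ihv => rw [lieadd]; exact Submodule.add_mem _ ihu ihv
  | smul c u hu ihu => rw [liesmul]; exact Submodule.smul_mem _ _ ihu

lemma bracket_spanI (hζm : ζ ^ m = 1) {q : LaurentPolynomial ℂ} {z w : Loop g}
    (hz : z ∈ spanT m σ ζ) (hw : w ∈ spanI m σ ζ q) : ⁅z, w⁆ ∈ spanI m σ ζ q := by
  obtain ⟨w', hw', rfl⟩ := hw
  rw [lsm_apply, liesmulA]
  exact ⟨⁅z, w'⁆, bracket_spanT m σ ζ hζm hz hw', rfl⟩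

lemma twistedLoop_coe (hζm : ζ ^ m = 1) :
    (twistedLoop m σ ζ).toSubmodule = spanT m σ ζ := by
  apply le_antisymm
  · have h : twistedLoop m σ ζ ≤
        ({ spanT m σ ζ with
            lie_mem' := fun {x y} hx hy => bracket_spanT m σ ζ hζm hx hy } :
          LieSubalgebra ℂ (Loop g)) :=
      LieSubalgebra.lieSpan_le.2 Submodule.subset_span
    exact fun z hz => h hz
  · exact Submodule.span_le.2 LieSubalgebra.subset_lieSpan

lemma mem_twistedLoop (hζm : ζ ^ m = 1) {z : Loop g} :
    z ∈ twistedLoop m σ ζ ↔ z ∈ spanT m σ ζ := by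
  rw [← twistedLoop_coe m σ ζ hζm]; rfl


/-- The ideal `⊕_ε g_ε ⊗ t^{m-ε}·q·ℂ[tᵐ,t⁻ᵐ]`, as an honest `LieIdeal` (no span closure). -/
def Jideal (hζm : ζ ^ m = 1) (q : LaurentPolynomial ℂ) :
    LieIdeal ℂ ↥(twistedLoop m σ ζ) :=
  { Submodule.comap ((twistedLoop m σ ζ).toSubmodule.subtype)
      (Submodule.span ℂ (twistedIdealSet m σ ζ q)) with
    lie_mem := by
      intro x z hz
      have hz1 : (z : Loop g) ∈ Submodule.span ℂ (twistedIdealSet m σ ζ q) := hz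
      have hz' : (z : Loop g) ∈ spanI m σ ζ q := by
        rwa [span_twistedIdealSet] at hz1
      have hx : (x : Loop g) ∈ spanT m σ ζ := by
        rw [← mem_twistedLoop m σ ζ hζm]; exact x.2
      have key : (⁅(x : Loop g), (z : Loop g)⁆ : Loop g) ∈
          Submodule.span ℂ (twistedIdealSet m σ ζ q) := by
        rw [span_twistedIdealSet]
        exact bracket_spanI m σ ζ hζm hx hz'
      exact key }

lemma twistedIdeal_eq (hζm : ζ ^ m = 1) (q : LaurentPolynomial ℂ) :
    twistedIdeal m σ ζ q = Jideal m σ ζ hζm q := by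
  have hset : {z : ↥(twistedLoop m σ ζ) |
      (z : Loop g) ∈ Submodule.span ℂ (twistedIdealSet m σ ζ q)} =
      ((Jideal m σ ζ hζm q : Set ↥(twistedLoop m σ ζ))) := rfl
  rw [twistedIdeal, hset, LieSubmodule.lieSpan_eq]

lemma mem_twistedIdeal (hζm : ζ ^ m = 1) (q : LaurentPolynomial ℂ)
    (z : ↥(twistedLoop m σ ζ)) :
    z ∈ (twistedIdeal m σ ζ q).toSubmodule ↔ (z : Loop g) ∈ spanI m σ ζ q := by
  rw [twistedIdeal_eq m σ ζ hζm]
  have h0 : z ∈ (Jideal m σ ζ hζm q).toSubmodule ↔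
      (z : Loop g) ∈ Submodule.span ℂ (twistedIdealSet m σ ζ q) := Iff.rfl
  rw [h0, span_twistedIdealSet]


set_option maxHeartbeats 1000000 in
theorem crt (hζm : ζ ^ m = 1) (ℓ : ℕ) (Q E : Fin ℓ → ℂ[X])
    (hE1 : ∀ r, Q r ∣ E r - 1)
    (hE2 : ∀ r s, r ≠ s → Q s ∣ E r)
    (hA : ∀ r, (∏ s, Q s) ∣ E r * Q r)
    (hD : (∏ s, Q s) ∣ (∑ r, E r) - 1) :
    Nonempty
      ((↥(twistedLoop m σ ζ) ⧸
          twistedIdeal m σ ζ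
            (Polynomial.aeval (T (m : ℤ) : LaurentPolynomial ℂ) (∏ r, Q r)))
        ≃ₗ⁅ℂ⁆ (DirectSum (Fin ℓ) fun r => ↥(twistedLoop m σ ζ) ⧸
          twistedIdeal m σ ζ
            (Polynomial.aeval (T (m : ℤ) : LaurentPolynomial ℂ) (Q r)))) := by
  classical
  set φ : ℂ[X] →ₐ[ℂ] LaurentPolynomial ℂ :=
    Polynomial.aeval (T (m : ℤ) : LaurentPolynomial ℂ) with hφ
  set It : Submodule ℂ ↥(twistedLoop m σ ζ) :=
    (twistedIdeal m σ ζ (φ (∏ r, Q r))).toSubmodule with hIt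
  set Ir : Fin ℓ → Submodule ℂ ↥(twistedLoop m σ ζ) :=
    fun r => (twistedIdeal m σ ζ (φ (Q r))).toSubmodule with hIr
  have hcz : ∀ z : ↥(twistedLoop m σ ζ), (z : Loop g) ∈ spanT m σ ζ :=
    fun z => (mem_twistedLoop m σ ζ hζm).1 z.2
  have memIt : ∀ z : ↥(twistedLoop m σ ζ),
      z ∈ It ↔ (z : Loop g) ∈ spanI m σ ζ (φ (∏ r, Q r)) :=
    fun z => mem_twistedIdeal m σ ζ hζm _ z
  have memIr : ∀ (r) (z : ↥(twistedLoop m σ ζ)),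
      z ∈ Ir r ↔ (z : Loop g) ∈ spanI m σ ζ (φ (Q r)) :=
    fun r z => mem_twistedIdeal m σ ζ hζm _ z
  -- the multiplication operators
  have hμmem : ∀ (r : Fin ℓ) (z : ↥(twistedLoop m σ ζ)),
      φ (E r) • (z : Loop g) ∈ twistedLoop m σ ζ := fun r z =>
    (mem_twistedLoop m σ ζ hζm).2 (aeval_smul_spanT m σ ζ (E r) (hcz z))
  set μ : Fin ℓ → (↥(twistedLoop m σ ζ) →ₗ[ℂ] ↥(twistedLoop m σ ζ)) := fun r =>
    { toFun := fun z => ⟨φ (E r) • (z : Loop g), hμmem r z⟩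
      map_add' := fun z w => Subtype.ext (by
        show φ (E r) • ((z : Loop g) + (w : Loop g)) = _
        rw [smul_add]; rfl)
      map_smul' := fun c z => Subtype.ext (by
        show φ (E r) • (c • (z : Loop g)) = _
        rw [csmul_comm]; rfl) } with hμ
  -- the forward map
  have hFle : ∀ r, It ≤ Submodule.comap
      (LinearMap.id : ↥(twistedLoop m σ ζ) →ₗ[ℂ] ↥(twistedLoop m σ ζ)) (Ir r) := by
    intro r z hz
    rw [Submodule.mem_comap]
    rw [memIt] at hz
    obtain ⟨w, hw, hzw⟩ := (mem_spanI m σ ζ).1 hz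
    rw [memIr]
    show (z : Loop g) ∈ _
    rw [hzw]
    exact dvd_smul_mem m σ ζ (Finset.dvd_prod_of_mem Q (Finset.mem_univ r)) hw
  set Fr : ∀ r : Fin ℓ, (↥(twistedLoop m σ ζ) ⧸ It) →ₗ[ℂ]
      (↥(twistedLoop m σ ζ) ⧸ Ir r) :=
    fun r => Submodule.mapQ It (Ir r) LinearMap.id (hFle r) with hFr
  set fam : Fin ℓ → Type _ :=
    fun r => ↥(twistedLoop m σ ζ) ⧸ twistedIdeal m σ ζ (φ (Q r)) with hfam
  set F0 : (↥(twistedLoop m σ ζ) ⧸ It) →ₗ[ℂ] DirectSum (Fin ℓ) fam :=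
    ∑ r, (DirectSum.lof ℂ (Fin ℓ) fam r).comp (Fr r) with hF0
  -- the reverse map
  have hGle : ∀ r, Ir r ≤ Submodule.comap (μ r) It := by
    intro r z hz
    rw [Submodule.mem_comap, memIt]
    rw [memIr] at hz
    obtain ⟨w, hw, hzw⟩ := (mem_spanI m σ ζ).1 hz
    show φ (E r) • (z : Loop g) ∈ _
    rw [hzw, smul_smul, ← map_mul]
    exact dvd_smul_mem m σ ζ (hA r) hw
  set G0 : DirectSum (Fin ℓ) fam →ₗ[ℂ] (↥(twistedLoop m σ ζ) ⧸ It) :=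
    DirectSum.toModule ℂ (Fin ℓ) _
      (fun r => Submodule.mapQ (Ir r) It (μ r) (hGle r)) with hG0
  -- key computation lemmas
  have hF0mk : ∀ (z : ↥(twistedLoop m σ ζ)) (i : Fin ℓ),
      F0 (Submodule.Quotient.mk z) i = (Submodule.Quotient.mk z : _ ⧸ Ir i) := by
    intro z i
    rw [hF0, LinearMap.sum_apply, DFinsupp.finset_sum_apply]
    rw [Finset.sum_eq_single i]
    · rw [LinearMap.comp_apply, DirectSum.lof_apply]
      rfl
    · intro r _ hr
      rw [LinearMap.comp_apply, DirectSum.lof_eq_of, DirectSum.of_eq_of_ne _ _ _ (Ne.symm hr)]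
    · intro h; exact absurd (Finset.mem_univ i) h
  have hG0lof : ∀ (r : Fin ℓ) (z : ↥(twistedLoop m σ ζ)),
      G0 (DirectSum.lof ℂ (Fin ℓ) fam r (Submodule.Quotient.mk z)) =
        Submodule.Quotient.mk (μ r z) := by
    intro r z
    rw [hG0, DirectSum.toModule_lof]
    rfl
  have hcoeμ : ∀ (r : Fin ℓ) (z : ↥(twistedLoop m σ ζ)),
      ((μ r z : ↥(twistedLoop m σ ζ)) : Loop g) = φ (E r) • (z : Loop g) := fun r z => rfl
  -- left inverse
  have hleft : ∀ x, G0 (F0 x) = x := by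
    intro x
    obtain ⟨z, rfl⟩ := Submodule.Quotient.mk_surjective It x
    have h1 : F0 (Submodule.Quotient.mk z) =
        ∑ r, DirectSum.lof ℂ (Fin ℓ) fam r (Submodule.Quotient.mk z) := by
      rw [hF0, LinearMap.sum_apply]
      refine Finset.sum_congr rfl fun r _ => rfl
    rw [h1, map_sum]
    have h2 : ∀ r, G0 (DirectSum.lof ℂ (Fin ℓ) fam r (Submodule.Quotient.mk z)) =
        Submodule.Quotient.mk (μ r z) := fun r => hG0lof r z
    rw [Finset.sum_congr rfl fun r _ => h2 r]
    have h3 : (∑ r, (Submodule.Quotient.mk (μ r z) : _ ⧸ It)) =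
        Submodule.Quotient.mk (∑ r, μ r z) := by
      exact (map_sum (Submodule.mkQ It) (fun r => μ r z) Finset.univ).symm
    rw [h3, Submodule.Quotient.eq]
    rw [memIt]
    have h5 : ((∑ r, μ r z : ↥(twistedLoop m σ ζ)) : Loop g) =
        (∑ r, φ (E r)) • (z : Loop g) := by
      rw [AddSubmonoidClass.coe_finset_sum, Finset.sum_smul]
      rfl
    have hsub : (((∑ r, μ r z) - z : ↥(twistedLoop m σ ζ)) : Loop g) =
        φ ((∑ r, E r) - 1) • (z : Loop g) := by
      calc (((∑ r, μ r z) - z : ↥(twistedLoop m σ ζ)) : Loop g)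
          = (∑ r, φ (E r)) • (z : Loop g) - (z : Loop g) := by
            rw [AddSubgroupClass.coe_sub, h5]
        _ = ((∑ r, φ (E r)) - 1) • (z : Loop g) := by
            rw [sub_smul_loop, one_smul_loop]
        _ = φ ((∑ r, E r) - 1) • (z : Loop g) := by rw [map_sub, map_sum, map_one]
    rw [hsub]
    exact dvd_smul_mem m σ ζ hD (hcz z)
  -- right inverse
  have hright : ∀ y, F0 (G0 y) = y := by
    intro y
    induction y using DirectSum.induction_on with
    | zero => rw [map_zero, map_zero]
    | add u v hu hv => rw [map_add, map_add, hu, hv]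
    | of i x =>
      obtain ⟨z, rfl⟩ := Submodule.Quotient.mk_surjective
        (twistedIdeal m σ ζ (φ (Q i))).toSubmodule x
      rw [← DirectSum.lof_eq_of ℂ, hG0lof i z]
      refine DFinsupp.ext fun j => ?_
      rw [hF0mk]
      by_cases hji : j = i
      · subst hji
        rw [DirectSum.lof_apply]
        rw [Submodule.Quotient.eq, memIr]
        have : ((μ j z - z : ↥(twistedLoop m σ ζ)) : Loop g) =
            φ (E j - 1) • (z : Loop g) := by
          calc ((μ j z - z : ↥(twistedLoop m σ ζ)) : Loop g)
              = φ (E j) • (z : Loop g) - (z : Loop g) := by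
                rw [AddSubgroupClass.coe_sub, hcoeμ]
            _ = (φ (E j) - 1) • (z : Loop g) := by rw [sub_smul_loop, one_smul_loop]
            _ = φ (E j - 1) • (z : Loop g) := by rw [map_sub, map_one]
        rw [this]
        exact dvd_smul_mem m σ ζ (hE1 j) (hcz z)
      · rw [DirectSum.lof_eq_of, DirectSum.of_eq_of_ne _ _ _ hji]
        rw [Submodule.Quotient.mk_eq_zero, memIr]
        rw [hcoeμ]
        exact dvd_smul_mem m σ ζ (hE2 i j (fun h => hji h.symm)) (hcz z)
  -- F0 is a morphism of Lie algebras
  have hmaplie : ∀ x y : ↥(twistedLoop m σ ζ) ⧸ twistedIdeal m σ ζ (φ (∏ r, Q r)),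
      F0 ⁅x, y⁆ = ⁅F0 x, F0 y⁆ := by
    intro x y
    obtain ⟨z, rfl⟩ := Submodule.Quotient.mk_surjective It x
    obtain ⟨w, rfl⟩ := Submodule.Quotient.mk_surjective It y
    have hbr :=
      (LieSubmodule.Quotient.mk_bracket (I := twistedIdeal m σ ζ (φ (∏ r, Q r))) z w).symm
    rw [hbr]
    refine DFinsupp.ext fun i => ?_
    rw [DirectSum.bracket_apply, hF0mk, hF0mk, hF0mk]
    exact LieSubmodule.Quotient.mk_bracket (I := twistedIdeal m σ ζ (φ (Q i))) z w
  exact ⟨{ toLinearMap := F0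
           map_lie' := fun {x y} => hmaplie x y
           invFun := G0
           left_inv := hleft
           right_inv := hright }⟩

end Stmt9Aux

/-- The Lie ideal `g ⊗ f·ℂ[t,t⁻¹]` of the loop algebra, for `f ∈ ℂ[t,t⁻¹]`. -/
def loopIdeal (f : LaurentPolynomial ℂ) : LieIdeal ℂ (Loop g) :=
  LieSubmodule.lieSpan ℂ (Loop g)
    {z | ∃ (p : LaurentPolynomial ℂ) (x : g), p ∈ Ideal.span {f} ∧ z = p ⊗ₜ[ℂ] x}

set_option maxHeartbeats 1000000 in
/-- Let `a 1, …, a ℓ` be nonzero complex numbers with `a r ^ m` pairwise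
distinct and `N ∈ ℤ₊`.  Then
`L^σ(g)/(⊕_ε g_ε ⊗ t^{m-ε} ∏_k (tᵐ - a_kᵐ)^N ℂ[tᵐ,t⁻ᵐ])` is isomorphic as a Lie algebra
to the direct sum over `r` of `L^σ(g)/(⊕_ε g_ε ⊗ t^{m-ε}(tᵐ - a_rᵐ)^N ℂ[tᵐ,t⁻ᵐ])`. -/
theorem stmt9 [LieAlgebra.IsSimple ℂ g] [FiniteDimensional ℂ g]
    (m : ℕ) (hm : 0 < m) (σ : g ≃ₗ⁅ℂ⁆ g) (hσ : ∀ x, (⇑σ)^[m] x = x)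
    (ζ : ℂ) (hζ : IsPrimitiveRoot ζ m)
    (ℓ : ℕ) (a : Fin ℓ → ℂ) (ha : ∀ r, a r ≠ 0)
    (hinj : Function.Injective fun r => a r ^ m) (N : ℕ) :
    Nonempty
      ((↥(twistedLoop m σ ζ) ⧸
          twistedIdeal m σ ζ (∏ r, (T (m : ℤ) - C (a r ^ m)) ^ N))
        ≃ₗ⁅ℂ⁆ (DirectSum (Fin ℓ) fun r => ↥(twistedLoop m σ ζ) ⧸
          twistedIdeal m σ ζ ((T (m : ℤ) - C (a r ^ m)) ^ N))) := by
  classical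
  have hζm : ζ ^ m = 1 := hζ.pow_eq_one
  set Q : Fin ℓ → Polynomial ℂ :=
    fun r => (Polynomial.X - Polynomial.C (a r ^ m)) ^ N with hQ
  have hφQ : ∀ r, Polynomial.aeval (T (m : ℤ) : LaurentPolynomial ℂ) (Q r) =
      (T (m : ℤ) - C (a r ^ m)) ^ N := by
    intro r
    simp only [hQ, map_pow, map_sub, Polynomial.aeval_X, Polynomial.aeval_C]
    rw [← C_eq_algebraMap]
  have hφQt : Polynomial.aeval (T (m : ℤ) : LaurentPolynomial ℂ) (∏ r, Q r) =
      ∏ r, (T (m : ℤ) - C (a r ^ m)) ^ N := by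
    rw [map_prod]
    exact Finset.prod_congr rfl fun r _ => hφQ r
  have hcop : Pairwise (Function.onFun IsCoprime Q) := fun r s hrs =>
    (Polynomial.pairwise_coprime_X_sub_C hinj hrs).pow
  have hEex : ∀ r : Fin ℓ, ∃ e : Polynomial ℂ,
      (Q r ∣ e - 1) ∧ ∀ s, s ≠ r → Q s ∣ e := by
    intro r
    have h1 : IsCoprime (Q r) (∏ s ∈ Finset.univ.erase r, Q s) :=
      IsCoprime.prod_right fun s hs => hcop (Ne.symm (Finset.ne_of_mem_erase hs))
    obtain ⟨u, v, huv⟩ := h1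
    refine ⟨v * ∏ s ∈ Finset.univ.erase r, Q s, ⟨-u, by linear_combination huv⟩,
      fun s hs => ?_⟩
    exact Dvd.dvd.mul_left
      (Finset.dvd_prod_of_mem Q (Finset.mem_erase.2 ⟨hs, Finset.mem_univ s⟩)) v
  choose E hE1 hE2 using hEex
  have hQdvd : ∀ p : Polynomial ℂ, (∀ r, Q r ∣ p) → (∏ r, Q r) ∣ p := fun p hp =>
    Finset.prod_dvd_of_coprime (hcop.set_pairwise _) fun r _ => hp r
  have hA : ∀ r, (∏ s, Q s) ∣ E r * Q r := by
    intro r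
    refine hQdvd _ fun t => ?_
    rcases eq_or_ne t r with rfl | ht
    · exact Dvd.dvd.mul_left dvd_rfl (E t)
    · exact Dvd.dvd.mul_right (hE2 r t ht) (Q r)
  have hD : (∏ s, Q s) ∣ (∑ r, E r) - 1 := by
    refine hQdvd _ fun t => ?_
    have hsplit : (∑ r, E r) - 1 = (E t - 1) + ∑ r ∈ Finset.univ.erase t, E r := by
      rw [← Finset.add_sum_erase Finset.univ E (Finset.mem_univ t)]
      ring
    rw [hsplit]
    exact dvd_add (hE1 t)
      (Finset.dvd_sum fun s hs => hE2 s t (Ne.symm (Finset.mem_erase.1 hs).1))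
  have key : ∀ (qt : LaurentPolynomial ℂ) (qr : Fin ℓ → LaurentPolynomial ℂ),
      qt = Polynomial.aeval (T (m : ℤ) : LaurentPolynomial ℂ) (∏ r, Q r) →
      qr = (fun r => Polynomial.aeval (T (m : ℤ) : LaurentPolynomial ℂ) (Q r)) →
      Nonempty ((↥(twistedLoop m σ ζ) ⧸ twistedIdeal m σ ζ qt) ≃ₗ⁅ℂ⁆
        (DirectSum (Fin ℓ) fun r => ↥(twistedLoop m σ ζ) ⧸ twistedIdeal m σ ζ (qr r))) := by
    rintro qt qr rfl rfl
    exact Stmt9Aux.crt m σ ζ hζm ℓ Q E hE1 (fun r s hrs => hE2 r s (Ne.symm hrs)) hA hD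
  exact key _ _ hφQt.symm (funext fun r => (hφQ r).symm)
end
end

section
/- Let a_1,...,a_ℓ be nonzero complex numbers such that both (a_1,...,a_ℓ) and (a_1^m,...,a_ℓ^m) have pairwise distinct coordinates. Then the composite map L^σ(𝔤) → L(𝔤) → L(𝔤)/(𝔤 ⊗ ∏_{k=1}^ℓ (t-a_k)^N C[t,t^{-1}]) is surjective for every positive integer N. -/
open scoped TensorProduct
open LaurentPolynomial

noncomputable section

section Aux

lemma aux_step_w (m : ℕ) (hm : 0 < m) (a : ℂ) (ha : a ≠ 0) :
    ∃ w : Polynomial ℂ, (Polynomial.X : Polynomial ℂ)^m - Polynomial.C (a^m)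
      = (Polynomial.X - Polynomial.C a) * w ∧ ¬ (Polynomial.X - Polynomial.C a ∣ w) := by
  have hdvd : (Polynomial.X - Polynomial.C a) ∣
      (Polynomial.X : Polynomial ℂ)^m - Polynomial.C (a^m) := by
    rw [Polynomial.dvd_iff_isRoot]; simp [Polynomial.IsRoot]
  obtain ⟨w, hw⟩ := hdvd
  refine ⟨w, hw, ?_⟩
  rw [Polynomial.dvd_iff_isRoot, Polynomial.IsRoot]
  intro h0
  have hder := congrArg Polynomial.derivative hw
  rw [Polynomial.derivative_sub, Polynomial.derivative_C, Polynomial.derivative_X_pow,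
    Polynomial.derivative_mul, Polynomial.derivative_sub, Polynomial.derivative_X,
    Polynomial.derivative_C] at hder
  have h2 := congrArg (Polynomial.eval a) hder
  simp [h0, ha, hm.ne'] at h2

lemma aux_multTransfer (m : ℕ) (hm : 0 < m) (a : ℂ) (ha : a ≠ 0) (n : ℕ) :
    ∀ u : Polynomial ℂ, (Polynomial.X - Polynomial.C a)^n ∣ u.comp (Polynomial.X^m) →
      (Polynomial.X - Polynomial.C (a^m))^n ∣ u := by
  induction n with
  | zero => intro u _; exact one_dvd _
  | succ n ih =>
    intro u h
    have h1 : (Polynomial.X - Polynomial.C a) ∣ u.comp (Polynomial.X^m) :=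
      dvd_trans (dvd_pow_self _ (Nat.succ_ne_zero n)) h
    have hroot : u.IsRoot (a^m) := by
      rw [Polynomial.dvd_iff_isRoot] at h1
      simpa [Polynomial.IsRoot] using h1
    obtain ⟨u₁, hu₁⟩ := (Polynomial.dvd_iff_isRoot).2 hroot
    obtain ⟨w, hw, hwnd⟩ := aux_step_w m hm a ha
    have hcomp : u.comp (Polynomial.X^m)
        = (Polynomial.X - Polynomial.C a) * (w * u₁.comp (Polynomial.X^m)) := by
      rw [hu₁]
      simp only [Polynomial.mul_comp, Polynomial.sub_comp, Polynomial.X_comp, Polynomial.C_comp]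
      rw [hw]; ring
    rw [hcomp, pow_succ'] at h
    have hc : (Polynomial.X - Polynomial.C a)^n ∣ w * u₁.comp (Polynomial.X^m) :=
      (mul_dvd_mul_iff_left (by exact Polynomial.X_sub_C_ne_zero a)).1 h
    have hd : (Polynomial.X - Polynomial.C a)^n ∣ u₁.comp (Polynomial.X^m) :=
      (Polynomial.prime_X_sub_C a).pow_dvd_of_dvd_mul_left n hwnd hc
    have := ih u₁ hd
    rw [hu₁, pow_succ']
    exact mul_dvd_mul_left _ this

lemma aux_key (m : ℕ) (hm : 0 < m) (ℓ N : ℕ) (a : Fin ℓ → ℂ) (ha : ∀ r, a r ≠ 0)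
    (hinjm : Function.Injective fun r => a r ^ m) (P : Polynomial ℂ) :
    ∃ u : Polynomial ℂ,
      (∏ r, (Polynomial.X - Polynomial.C (a r))^N) ∣ (P - u.comp (Polynomial.X^m)) := by
  set F : Polynomial ℂ := ∏ r, (Polynomial.X - Polynomial.C (a r))^N with hF
  set G : Polynomial ℂ := ∏ r, (Polynomial.X - Polynomial.C (a r ^ m))^N with hG
  have hF0 : F ≠ 0 := by
    apply Polynomial.Monic.ne_zero
    exact Polynomial.monic_prod_of_monic _ _ fun r _ => (Polynomial.monic_X_sub_C _).pow N
  have hG0 : G ≠ 0 := by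
    apply Polynomial.Monic.ne_zero
    exact Polynomial.monic_prod_of_monic _ _ fun r _ => (Polynomial.monic_X_sub_C _).pow N
  have hdeg : G.natDegree = F.natDegree := by
    rw [hF, hG,
      Polynomial.natDegree_prod _ _ (fun r _ => pow_ne_zero _ (Polynomial.X_sub_C_ne_zero _)),
      Polynomial.natDegree_prod _ _ (fun r _ => pow_ne_zero _ (Polynomial.X_sub_C_ne_zero _))]
    simp only [Polynomial.natDegree_pow, Polynomial.natDegree_X_sub_C]
  have hFdvdG : F ∣ G.comp (Polynomial.X^m) := by
    rw [hG, Polynomial.prod_comp]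
    apply Finset.prod_dvd_prod_of_dvd
    intro r _
    rw [Polynomial.pow_comp, Polynomial.sub_comp, Polynomial.X_comp, Polynomial.C_comp]
    apply pow_dvd_pow_of_dvd
    rw [Polynomial.dvd_iff_isRoot]
    simp [Polynomial.IsRoot]
  have h0 : Polynomial.aeval ((AdjoinRoot.root F)^m) G = 0 := by
    have h1 : ((AdjoinRoot.root F)^m)
        = Polynomial.aeval (AdjoinRoot.root F) ((Polynomial.X : Polynomial ℂ)^m) := by simp
    rw [h1, ← Polynomial.aeval_comp, AdjoinRoot.aeval_eq, AdjoinRoot.mk_eq_zero]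
    exact hFdvdG
  set φ : AdjoinRoot G →ₐ[ℂ] AdjoinRoot F := AdjoinRoot.liftAlgHom G (Algebra.ofId ℂ _) _ h0 with hφ
  have hφmk : ∀ u : Polynomial ℂ,
      φ (AdjoinRoot.mk G u) = AdjoinRoot.mk F (u.comp (Polynomial.X^m)) := by
    intro u
    rw [hφ]; show Polynomial.aeval ((AdjoinRoot.root F)^m) u = _
    rw [show ((AdjoinRoot.root F)^m)
        = Polynomial.aeval (AdjoinRoot.root F) ((Polynomial.X : Polynomial ℂ)^m) by simp,
      ← Polynomial.aeval_comp, AdjoinRoot.aeval_eq]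
  have hinj : Function.Injective φ := by
    rw [injective_iff_map_eq_zero]
    intro z hz
    obtain ⟨u, rfl⟩ := AdjoinRoot.mk_surjective z
    rw [hφmk, AdjoinRoot.mk_eq_zero] at hz
    rw [AdjoinRoot.mk_eq_zero, hG]
    apply Fintype.prod_dvd_of_coprime
    · exact fun r s hrs => ((Polynomial.pairwise_coprime_X_sub_C hinjm) hrs).pow
    · intro r
      apply aux_multTransfer m hm (a r) (ha r) N
      exact dvd_trans
        (Finset.dvd_prod_of_mem (fun s => (Polynomial.X - Polynomial.C (a s))^N)
          (Finset.mem_univ r)) hz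
  haveI : Module.Finite ℂ (AdjoinRoot F) := (AdjoinRoot.powerBasis hF0).finite
  haveI : Module.Finite ℂ (AdjoinRoot G) := (AdjoinRoot.powerBasis hG0).finite
  have hfr : Module.finrank ℂ (AdjoinRoot G) = Module.finrank ℂ (AdjoinRoot F) := by
    rw [(AdjoinRoot.powerBasis hG0).finrank, (AdjoinRoot.powerBasis hF0).finrank]
    simpa using hdeg
  have hsurj : Function.Surjective φ.toLinearMap :=
    (LinearMap.injective_iff_surjective_of_finrank_eq_finrank hfr).1 hinj
  obtain ⟨z, hz⟩ := hsurj (AdjoinRoot.mk F P)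
  obtain ⟨u, rfl⟩ := AdjoinRoot.mk_surjective z
  refine ⟨u, ?_⟩
  rw [← AdjoinRoot.mk_eq_zero, map_sub]
  have h3 : φ (AdjoinRoot.mk G u) = AdjoinRoot.mk F P := hz
  rw [hφmk] at h3
  rw [← h3, sub_self]

lemma aux_smul_T (c : ℂ) (n : ℤ) : (LaurentPolynomial.C c) * T n = c • T n := by
  rw [← single_eq_C_mul_T]
  show _ = c • AddMonoidAlgebra.single n (1:ℂ)
  rw [AddMonoidAlgebra.smul_single, smul_eq_mul, mul_one]

lemma aux_L1 (m : ℕ) (u : Polynomial ℂ) (c ε : ℤ) :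
    Polynomial.toLaurent (u.comp (Polynomial.X ^ m)) * T ((m:ℤ) * c - ε) ∈
      Submodule.span ℂ {z : LaurentPolynomial ℂ | ∃ k : ℤ, z = T ((m:ℤ) * k - ε)} := by
  induction u using Polynomial.induction_on' with
  | add p q hp hq =>
    rw [Polynomial.add_comp, map_add, add_mul]
    exact Submodule.add_mem _ hp hq
  | monomial n c₀ =>
    have h1 : (Polynomial.monomial n c₀).comp (Polynomial.X ^ m)
        = Polynomial.C c₀ * Polynomial.X ^ (m * n) := by
      rw [Polynomial.monomial_comp, ← pow_mul]
    rw [h1, map_mul, Polynomial.toLaurent_C, Polynomial.toLaurent_X_pow]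
    have h2 : (LaurentPolynomial.C c₀ * T (m * n : ℕ)) * T ((m:ℤ) * c - ε)
        = LaurentPolynomial.C c₀ * T ((m:ℤ) * (n + c) - ε) := by
      rw [mul_assoc, ← T_add]
      congr 2
      push_cast
      ring
    rw [h2, aux_smul_T]
    exact Submodule.smul_mem _ _ (Submodule.subset_span ⟨n + c, rfl⟩)

lemma aux_L2 (m : ℕ) (hm : 0 < m) (F : Polynomial ℂ)
    (hkey : ∀ P : Polynomial ℂ, ∃ u : Polynomial ℂ, F ∣ (P - u.comp (Polynomial.X ^ m)))
    (p : LaurentPolynomial ℂ) (ε : ℤ) :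
    p ∈ Submodule.span ℂ {z : LaurentPolynomial ℂ | ∃ k : ℤ, z = T ((m:ℤ) * k - ε)} ⊔
      (Ideal.span {Polynomial.toLaurent F}).restrictScalars ℂ := by
  obtain ⟨n, P₀, hP₀⟩ := LaurentPolynomial.exists_T_pow (p * T ε)
  have hle : n ≤ m * n := Nat.le_mul_of_pos_left n hm
  have hP : p = Polynomial.toLaurent (P₀ * Polynomial.X ^ (m * n - n))
      * T (-((m:ℤ) * n) - ε) := by
    rw [map_mul, Polynomial.toLaurent_X_pow, hP₀]
    rw [mul_assoc, mul_assoc, mul_assoc, ← T_add, ← T_add, ← T_add]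
    have : (ε : ℤ) + ((n : ℤ) + (↑(m * n - n) + (-((m:ℤ) * n) - ε))) = 0 := by
      push_cast [hle]; ring
    rw [this, T_zero, mul_one]
  obtain ⟨u, hu⟩ := hkey (P₀ * Polynomial.X ^ (m * n - n))
  obtain ⟨v, hv⟩ := hu
  rw [Submodule.mem_sup]
  refine ⟨Polynomial.toLaurent (u.comp (Polynomial.X ^ m)) * T ((m:ℤ) * (-n) - ε),
    aux_L1 m u (-n) ε,
    Polynomial.toLaurent F * (Polynomial.toLaurent v * T (-((m:ℤ) * n) - ε)),
    Ideal.mem_span_singleton.2 (Dvd.intro _ rfl), ?_⟩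
  have hexp : (m:ℤ) * (-(n:ℤ)) - ε = -((m:ℤ) * n) - ε := by ring
  rw [hexp, hP]
  have hsplit : P₀ * Polynomial.X ^ (m * n - n)
      = u.comp (Polynomial.X ^ m) + F * v := by
    rw [← hv]; ring
  rw [hsplit, map_add, add_mul, map_mul]
  ring

lemma aux_eigdecomp {V : Type*} [AddCommGroup V] [Module ℂ V]
    (m : ℕ) (hm : 0 < m) (ζ : ℂ) (hζ : IsPrimitiveRoot ζ m)
    (s : Module.End ℂ V) (hs : s ^ m = 1) (x : V) :
    ∃ c : Fin m → V, (∀ ε : Fin m, c ε ∈ Module.End.eigenspace s (ζ ^ (ε : ℕ))) ∧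
      x = ∑ ε, c ε := by
  have hζm : ζ ^ m = 1 := hζ.pow_eq_one
  have hζ0 : ζ ≠ 0 := by
    intro h
    rw [h, zero_pow hm.ne'] at hζm
    exact one_ne_zero hζm.symm
  refine ⟨fun ε => (m : ℂ)⁻¹ • ∑ k ∈ Finset.range m, ((ζ ^ (ε : ℕ))⁻¹) ^ k • (s ^ k) x, ?_, ?_⟩
  · intro ε
    have hμm : (ζ ^ (ε : ℕ)) ^ m = 1 := by rw [← pow_mul, mul_comm, pow_mul, hζm, one_pow]
    have hμ0 : (ζ : ℂ) ^ (ε : ℕ) ≠ 0 := pow_ne_zero _ hζ0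
    rw [Module.End.mem_eigenspace_iff]
    have claim1 : ∀ k, ((ζ ^ (ε : ℕ))⁻¹) ^ k • (s ^ (k + 1)) x
        = (ζ ^ (ε : ℕ) * ((ζ ^ (ε : ℕ))⁻¹) ^ (k + 1)) • (s ^ (k + 1)) x := by
      intro k
      congr 1
      rw [pow_succ, ← mul_comm ((ζ ^ (ε : ℕ))⁻¹), ← mul_assoc, mul_inv_cancel₀ hμ0, one_mul]
    have claim2 : (ζ ^ (ε : ℕ) * ((ζ ^ (ε : ℕ))⁻¹) ^ m) • (s ^ m) x
        = (ζ ^ (ε : ℕ) * ((ζ ^ (ε : ℕ))⁻¹) ^ 0) • (s ^ 0) x := by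
      rw [hs, inv_pow, hμm, inv_one, pow_zero]
      simp
    have hshift : (∑ k ∈ Finset.range m,
          (ζ ^ (ε : ℕ) * ((ζ ^ (ε : ℕ))⁻¹) ^ (k + 1)) • (s ^ (k + 1)) x)
        = ∑ k ∈ Finset.range m, (ζ ^ (ε : ℕ) * ((ζ ^ (ε : ℕ))⁻¹) ^ k) • (s ^ k) x := by
      have h1 := Finset.sum_range_succ'
        (fun j => (ζ ^ (ε : ℕ) * ((ζ ^ (ε : ℕ))⁻¹) ^ j) • (s ^ j) x) m
      have h2 := Finset.sum_range_succ
        (fun j => (ζ ^ (ε : ℕ) * ((ζ ^ (ε : ℕ))⁻¹) ^ j) • (s ^ j) x) m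
      rw [h2, claim2] at h1
      exact (add_right_cancel h1).symm
    rw [map_smul, map_sum, smul_comm]
    congr 1
    calc ∑ k ∈ Finset.range m, s (((ζ ^ (ε : ℕ))⁻¹) ^ k • (s ^ k) x)
        = ∑ k ∈ Finset.range m,
            (ζ ^ (ε : ℕ) * ((ζ ^ (ε : ℕ))⁻¹) ^ (k + 1)) • (s ^ (k + 1)) x := by
          refine Finset.sum_congr rfl fun k _ => ?_
          rw [map_smul, ← Module.End.mul_apply, ← pow_succ']
          exact claim1 k
      _ = ∑ k ∈ Finset.range m, (ζ ^ (ε : ℕ) * ((ζ ^ (ε : ℕ))⁻¹) ^ k) • (s ^ k) x := hshift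
      _ = ζ ^ (ε : ℕ) • ∑ k ∈ Finset.range m, ((ζ ^ (ε : ℕ))⁻¹) ^ k • (s ^ k) x := by
          rw [Finset.smul_sum]
          exact Finset.sum_congr rfl fun k _ => (mul_smul _ _ _)
  · have hco : ∀ k ∈ Finset.range m,
        (∑ ε ∈ Finset.range m, (((ζ ^ k)⁻¹) ^ ε : ℂ)) • (s ^ k) x
          = if k = 0 then (m : ℂ) • x else 0 := by
      intro k hk
      rcases eq_or_ne k 0 with rfl | hk0
      · simp
      · rw [if_neg hk0]
        have hne1 : ((ζ ^ k)⁻¹ : ℂ) ≠ 1 := by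
          intro h
          exact hζ.pow_ne_one_of_pos_of_lt hk0 (Finset.mem_range.1 hk)
            (by rw [← inv_inv (ζ ^ k), h, inv_one])
        rw [geom_sum_eq hne1]
        have hz : ((ζ ^ k)⁻¹ : ℂ) ^ m - 1 = 0 := by
          rw [inv_pow, ← pow_mul, mul_comm, pow_mul, hζm, one_pow, inv_one, sub_self]
        rw [hz, zero_div, zero_smul]
    calc x = (m : ℂ)⁻¹ • ((m : ℂ) • x) := by
            rw [smul_smul, inv_mul_cancel₀ (Nat.cast_ne_zero.2 hm.ne'), one_smul]
      _ = (m : ℂ)⁻¹ • ∑ k ∈ Finset.range m,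
            (∑ ε ∈ Finset.range m, (((ζ ^ k)⁻¹) ^ ε : ℂ)) • (s ^ k) x := by
            rw [Finset.sum_congr rfl hco]
            rw [Finset.sum_ite_eq' (Finset.range m) 0 (fun _ => (m:ℂ) • x)]
            rw [if_pos (Finset.mem_range.2 hm)]
      _ = ∑ ε : Fin m, (m : ℂ)⁻¹ • ∑ k ∈ Finset.range m, ((ζ ^ (ε:ℕ))⁻¹) ^ k • (s ^ k) x := by
            rw [Fin.sum_univ_eq_sum_range (fun ε => (m : ℂ)⁻¹ •
              ∑ k ∈ Finset.range m, ((ζ ^ ε)⁻¹) ^ k • (s ^ k) x) m]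
            rw [← Finset.smul_sum]
            congr 1
            rw [Finset.sum_comm]
            refine Finset.sum_congr rfl fun k _ => ?_
            rw [Finset.sum_smul]
            refine Finset.sum_congr rfl fun ε _ => ?_
            congr 1
            rw [inv_pow, inv_pow, ← pow_mul, ← pow_mul, mul_comm]

end Aux

variable {g : Type*} [LieRing g] [LieAlgebra ℂ g]

/-- If `(a 1, …, a ℓ)` and `(a 1 ^ m, …, a ℓ ^ m)` both have pairwise
distinct (nonzero) coordinates, then the composite
`L^σ(g) → L(g) → L(g)/(g ⊗ ∏_k (t - a k)^N ℂ[t,t⁻¹])` is surjective for every `N > 0`. -/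
theorem stmt10 [LieAlgebra.IsSimple ℂ g] [FiniteDimensional ℂ g]
    (m : ℕ) (hm : 0 < m) (σ : g ≃ₗ⁅ℂ⁆ g) (hσ : ∀ x, (⇑σ)^[m] x = x)
    (ζ : ℂ) (hζ : IsPrimitiveRoot ζ m)
    (ℓ : ℕ) (a : Fin ℓ → ℂ) (ha : ∀ r, a r ≠ 0)
    (hinj : Function.Injective a)
    (hinjm : Function.Injective fun r => a r ^ m)
    (N : ℕ) (hN : 0 < N) :
    Function.Surjective fun z : ↥(twistedLoop m σ ζ) =>
      LieSubmodule.Quotient.mk' (loopIdeal (∏ r, (T 1 - C (a r)) ^ N)) (z : Loop g) := by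
  classical
  set f : LaurentPolynomial ℂ := ∏ r, (T 1 - C (a r)) ^ N with hfdef
  set F : Polynomial ℂ := ∏ r, (Polynomial.X - Polynomial.C (a r))^N with hFdef
  have hf : Polynomial.toLaurent F = f := by
    rw [hFdef, hfdef, map_prod]
    refine Finset.prod_congr rfl fun r _ => ?_
    rw [map_pow, map_sub, Polynomial.toLaurent_X, Polynomial.toLaurent_C]
  have hkey : ∀ P : Polynomial ℂ, ∃ u : Polynomial ℂ,
      F ∣ (P - u.comp (Polynomial.X ^ m)) :=
    fun P => aux_key m hm ℓ N a ha hinjm P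
  -- the endomorphism s with s ^ m = 1
  set s : Module.End ℂ g := (σ.toLinearEquiv : g →ₗ[ℂ] g) with hsdef
  have hs : s ^ m = 1 := by
    ext x
    rw [Module.End.pow_apply]
    show (⇑σ.toLinearEquiv)^[m] x = x
    have : ⇑σ.toLinearEquiv = ⇑σ := rfl
    rw [this]
    exact hσ x
  -- main submodule inclusion
  have hmain : ∀ w : Loop g, w ∈ (twistedLoop m σ ζ : Submodule ℂ (Loop g)) ⊔
      LieSubmodule.toSubmodule (loopIdeal f : LieIdeal ℂ (Loop g)) := by
    have htop : (⊤ : Submodule ℂ (Loop g)) ≤ (twistedLoop m σ ζ : Submodule ℂ (Loop g)) ⊔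
        LieSubmodule.toSubmodule (loopIdeal f : LieIdeal ℂ (Loop g)) := by
      rw [← TensorProduct.span_tmul_eq_top ℂ (LaurentPolynomial ℂ) g, Submodule.span_le]
      rintro w ⟨p, x, rfl⟩
      obtain ⟨c, hcmem, hcsum⟩ := aux_eigdecomp m hm ζ hζ s hs x
      rw [hcsum, TensorProduct.tmul_sum]
      refine Submodule.sum_mem _ fun ε _ => ?_
      have hp := aux_L2 m hm F hkey p ((ε : ℕ) : ℤ)
      rw [Submodule.mem_sup] at hp
      obtain ⟨p₁, hp₁, p₂, hp₂, rfl⟩ := hp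
      rw [TensorProduct.add_tmul]
      refine Submodule.add_mem _ ?_ ?_
      · apply Submodule.mem_sup_left
        have hmap : p₁ ⊗ₜ[ℂ] c ε
            = ((TensorProduct.mk ℂ (LaurentPolynomial ℂ) g).flip (c ε)) p₁ := rfl
        rw [hmap]
        have := Submodule.mem_map_of_mem
          (f := (TensorProduct.mk ℂ (LaurentPolynomial ℂ) g).flip (c ε)) hp₁
        rw [Submodule.map_span] at this
        refine Submodule.span_le.2 ?_ this
        rintro z ⟨q, ⟨k, rfl⟩, rfl⟩
        exact LieSubalgebra.subset_lieSpan ⟨ε, k, c ε, hcmem ε, rfl⟩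
      · apply Submodule.mem_sup_right
        apply LieSubmodule.subset_lieSpan
        refine ⟨p₂, c ε, ?_, rfl⟩
        rw [← hf]
        exact hp₂
    intro w
    exact htop trivial
  -- conclude surjectivity
  intro qbar
  obtain ⟨w, rfl⟩ := LieSubmodule.Quotient.surjective_mk' (loopIdeal f) qbar
  obtain ⟨y, hy, z', hz', hw⟩ := Submodule.mem_sup.1 (hmain w)
  refine ⟨⟨y, hy⟩, ?_⟩
  show LieSubmodule.Quotient.mk' (loopIdeal f) y = LieSubmodule.Quotient.mk' (loopIdeal f) w
  rw [← hw, map_add]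
  have hz0 : LieSubmodule.Quotient.mk' (loopIdeal f) z' = 0 :=
    (LieSubmodule.Quotient.mk_eq_zero _).2 hz'
  rw [hz0, add_zero]
end
end
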